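/- Let M = (m_{j',j})_{j',j ∈ ℤ²} be a bi-infinite matrix. Suppose there exist a monotonically decreasing function w: [0,∞) → [0,∞) with w(x) = O(x^{−2−δ}) for some δ > 0, and constants λ > 1 and K₀ > 0 such that |m_{j',j}| ≤ w(‖λj' − j‖_∞) whenever ‖λj' − j‖_∞ > K₀. Then M, viewed as an operator from finitely supported sequences in ℓ²(ℤ²) to ℓ²(ℤ²), is not bounded below: there is no constant c > 0 with ‖Mσ‖₂ ≥ c‖σ‖₂ for all finitely supported σ. -/

import Mathlib

open Filter

lemma summableA (p : ℝ) (hp : 1 < p) : Summable fun k : ℤ => (|(k : ℝ)| + 1) ^ (-p) := by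
  have hnat : Summable fun n : ℕ => ((n : ℝ) + 1) ^ (-p) := by
    have h0 : Summable fun n : ℕ => ((n : ℝ)) ^ (-p) := by
      rw [Real.summable_nat_rpow]; linarith
    have := h0.comp_injective (add_right_injective 1)
    simpa [Function.comp_def, add_comm] using this
  apply Summable.of_nat_of_neg
  · simpa using hnat
  · simpa using hnat

lemma maxkey (x y : ℝ) (hy : 0 ≤ y) (hxy : y - 1/2 ≤ x) :
    (y + 1) / 3 ≤ max x 1 := by
  rcases le_total y 2 with h | h
  · have : (y+1)/3 ≤ 1 := by linarith
    exact this.trans (le_max_right _ _)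
  · have : (y+1)/3 ≤ x := by linarith
    exact this.trans (le_max_left _ _)

lemma oneD (p : ℝ) (hp : 1 < p) : ∃ D : ℝ, 0 ≤ D ∧ ∀ t : ℝ,
    (∑' a : ℤ, ENNReal.ofReal ((max |(a : ℝ) - t| 1) ^ (-p))) ≤ ENNReal.ofReal D := by
  set S : ℝ := ∑' k : ℤ, (|(k : ℝ)| + 1) ^ (-p) with hS
  refine ⟨3 ^ p * S, ?_, ?_⟩
  · have hSnn : 0 ≤ S := tsum_nonneg fun k => Real.rpow_nonneg (by positivity) _
    positivity
  intro t
  set a₀ : ℤ := round t with ha₀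
  have key : ∀ a : ℤ, ENNReal.ofReal ((max |(a : ℝ) - t| 1) ^ (-p))
      ≤ ENNReal.ofReal (3 ^ p * (|((a - a₀ : ℤ) : ℝ)| + 1) ^ (-p)) := by
    intro a
    apply ENNReal.ofReal_le_ofReal
    have h1 : (|((a - a₀ : ℤ) : ℝ)| + 1) / 3 ≤ max |(a : ℝ) - t| 1 := by
      apply maxkey _ _ (abs_nonneg _)
      have h2 : |t - a₀| ≤ 1/2 := abs_sub_round t
      have h3 : |((a - a₀ : ℤ) : ℝ)| = |((a:ℝ) - a₀)| := by push_cast; ring_nf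
      have := abs_sub_abs_le_abs_sub ((a:ℝ) - a₀) ((a:ℝ) - t)
      have h4 : |(a:ℝ) - a₀ - ((a:ℝ) - t)| = |t - a₀| := by ring_nf
      rw [h3]
      rw [h4] at this
      linarith
    have hpos : (0:ℝ) < (|((a - a₀ : ℤ) : ℝ)| + 1) / 3 := by positivity
    calc (max |(a : ℝ) - t| 1) ^ (-p)
        ≤ ((|((a - a₀ : ℤ) : ℝ)| + 1) / 3) ^ (-p) := by
          apply Real.rpow_le_rpow_of_nonpos hpos h1 (by linarith)
      _ = 3 ^ p * (|((a - a₀ : ℤ) : ℝ)| + 1) ^ (-p) := by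
          rw [Real.div_rpow (by positivity) (by norm_num), Real.rpow_neg (by norm_num : (0:ℝ) ≤ 3)]
          rw [div_inv_eq_mul]; ring
  calc ∑' a : ℤ, ENNReal.ofReal ((max |(a : ℝ) - t| 1) ^ (-p))
      ≤ ∑' a : ℤ, ENNReal.ofReal (3 ^ p * (|((a - a₀ : ℤ) : ℝ)| + 1) ^ (-p)) :=
        ENNReal.tsum_le_tsum key
    _ = ∑' k : ℤ, ENNReal.ofReal (3 ^ p * (|(k : ℝ)| + 1) ^ (-p)) := by
        refine (Equiv.addRight a₀).tsum_eq (fun k => ENNReal.ofReal (3 ^ p * (|((k - a₀ : ℤ) : ℝ)| + 1) ^ (-p))) |>.symm.trans ?_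
        simp
    _ = ENNReal.ofReal (3 ^ p * S) := by
        rw [← ENNReal.ofReal_tsum_of_nonneg]
        · rw [hS, tsum_mul_left]
        · intro k; positivity
        · exact (summableA p hp).mul_left _


lemma exists_kernel (m : ℤ × ℤ → ℤ × ℤ → ℂ) (B S : Finset (ℤ × ℤ))
    (h : S.card < B.card) :
    ∃ σ : (ℤ × ℤ) →₀ ℂ, σ ≠ 0 ∧ σ.support ⊆ B ∧
      ∀ j' ∈ S, ∑ j ∈ B, m j' j * σ j = 0 := by
  classical
  let φ : (↥B → ℂ) →ₗ[ℂ] (↥S → ℂ) :=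
    { toFun := fun v j' => ∑ j : ↥B, m j' j * v j
      map_add' := by
        intro v w; funext j'; simp [mul_add, Finset.sum_add_distrib]
      map_smul' := by
        intro c v; funext j'; simp [Finset.mul_sum]; ring_nf
        simp [mul_assoc, mul_comm, mul_left_comm] }
  have hnotinj : ¬ Function.Injective φ := by
    intro hinj
    have := LinearMap.finrank_le_finrank_of_injective hinj
    simp only [Module.finrank_pi, Fintype.card_coe] at this
    omega
  rw [Function.not_injective_iff] at hnotinj
  obtain ⟨v, w2, hvw, hne⟩ := hnotinj
  set u : ↥B → ℂ := v - w2 with hu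
  have hu0 : u ≠ 0 := sub_ne_zero.2 hne
  have hφu : φ u = 0 := by rw [hu, map_sub, hvw, sub_self]
  set σ : (ℤ × ℤ) →₀ ℂ := Finsupp.onFinset B
    (fun j => if hj : j ∈ B then u ⟨j, hj⟩ else 0)
    (fun a ha => by by_contra hc; simp [hc] at ha) with hσ
  have hσval : ∀ (j) (hj : j ∈ B), σ j = u ⟨j, hj⟩ := by
    intro j hj; simp [hσ, Finsupp.onFinset, hj]
  refine ⟨σ, ?_, Finsupp.support_onFinset_subset, ?_⟩
  · intro h0
    apply hu0
    funext j
    have := hσval j j.2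
    rw [h0] at this
    simpa [Subtype.eta] using this.symm
  · intro j' hj'
    have h1 : ∑ j ∈ B, m j' j * σ j = ∑ j : ↥B, m j' ↑j * u j := by
      rw [← Finset.sum_coe_sort]
      apply Finset.sum_congr rfl
      intro j _
      rw [hσval ↑j j.2]
    rw [h1]
    have := congrFun hφu ⟨j', hj'⟩
    simpa [φ] using this


lemma entry_bound (C R δ u v s₁ s₂ W : ℝ) (hC : 0 ≤ C) (hδ : 0 < δ)
    (hR : 1 ≤ R) (hM : R < max u v) (hs₁ : s₁ ≤ u) (hs₂ : s₂ ≤ v)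
    (hW : 0 ≤ W) (hWb : W ≤ C * (max u v) ^ (-2 - δ)) :
    W ^ 2 ≤ C ^ 2 * R ^ (-(2+δ)) * ((max s₁ 1) ^ (-(1+δ/2)) * (max s₂ 1) ^ (-(1+δ/2))) := by
  set M := max u v with hMdef
  have hM1 : 1 ≤ M := le_trans hR hM.le
  have hM0 : 0 < M := by linarith
  have hu' : max s₁ 1 ≤ M := max_le (hs₁.trans (le_max_left u v)) hM1
  have hv' : max s₂ 1 ≤ M := max_le (hs₂.trans (le_max_right u v)) hM1
  have hs1pos : (0:ℝ) < max s₁ 1 := lt_of_lt_of_le one_pos (le_max_right _ _)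
  have hs2pos : (0:ℝ) < max s₂ 1 := lt_of_lt_of_le one_pos (le_max_right _ _)
  have huv : max s₁ 1 * max s₂ 1 ≤ M ^ 2 := by nlinarith
  have h1 : W ^ 2 ≤ C ^ 2 * (M ^ (-2-δ)) ^ 2 := by
    nlinarith [Real.rpow_nonneg hM0.le (-2-δ)]
  have h2 : (M ^ (-2-δ)) ^ 2 = M ^ (-(2+δ)) * M ^ (-(2+δ)) := by
    rw [sq, ← Real.rpow_add hM0, ← Real.rpow_add hM0]
    ring_nf
  have h3 : M ^ (-(2+δ)) ≤ R ^ (-(2+δ)) :=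
    Real.rpow_le_rpow_of_nonpos (by linarith) hM.le (by linarith)
  have h4 : M ^ (-(2+δ)) ≤ (max s₁ 1) ^ (-(1+δ/2)) * (max s₂ 1) ^ (-(1+δ/2)) := by
    have hq : (0:ℝ) ≤ 1 + δ/2 := by linarith
    have e1 : (max s₁ 1 * max s₂ 1) ^ (1+δ/2) ≤ (M ^ 2) ^ ((1:ℝ)+δ/2) :=
      Real.rpow_le_rpow (by positivity) huv hq
    have e2 : (M ^ 2) ^ ((1:ℝ)+δ/2) = M ^ (2+δ) := by
      rw [← Real.rpow_natCast M 2, ← Real.rpow_mul hM0.le]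
      norm_num
      ring_nf
    have pos1 : (0:ℝ) < (max s₁ 1 * max s₂ 1) ^ ((1:ℝ)+δ/2) :=
      Real.rpow_pos_of_pos (by positivity) _
    have step : M ^ (-(2+δ)) ≤ ((max s₁ 1 * max s₂ 1) ^ ((1:ℝ)+δ/2))⁻¹ := by
      rw [Real.rpow_neg hM0.le]
      apply inv_anti₀ pos1
      rw [← e2]; exact e1
    calc M ^ (-(2+δ)) ≤ ((max s₁ 1 * max s₂ 1) ^ ((1:ℝ)+δ/2))⁻¹ := step
      _ = (max s₁ 1) ^ (-(1+δ/2)) * (max s₂ 1) ^ (-(1+δ/2)) := by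
          rw [Real.mul_rpow hs1pos.le hs2pos.le, mul_inv,
            ← Real.rpow_neg hs1pos.le, ← Real.rpow_neg hs2pos.le]
  calc W ^ 2 ≤ C ^ 2 * (M ^ (-(2+δ)) * M ^ (-(2+δ))) := by rw [← h2]; exact h1
    _ ≤ C ^ 2 * (R ^ (-(2+δ)) * ((max s₁ 1) ^ (-(1+δ/2)) * (max s₂ 1) ^ (-(1+δ/2)))) := by
        have n1 : 0 ≤ M ^ (-(2+δ)) := Real.rpow_nonneg hM0.le _
        have n2 : 0 ≤ R ^ (-(2+δ)) := Real.rpow_nonneg (by linarith) _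
        have n3 : 0 ≤ (max s₁ 1) ^ (-(1+δ/2)) * (max s₂ 1) ^ (-(1+δ/2)) := by
          positivity
        exact mul_le_mul_of_nonneg_left (mul_le_mul h3 h4 n1 n2) (by positivity)
    _ = C ^ 2 * R ^ (-(2+δ)) * ((max s₁ 1) ^ (-(1+δ/2)) * (max s₂ 1) ^ (-(1+δ/2))) := by ring


set_option maxHeartbeats 2000000 in
/-- A bi-infinite matrix `(m_{j',j})_{j',j∈ℤ²}` whose entries decay like
`|m_{j',j}| ≤ w(‖λj' − j‖_∞)` off a skew diagonal of slope `λ > 1`, where `w` is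
monotonically decreasing with `w(x) = O(x^{−2−δ})`, is not stable: there is no `c > 0`
with `‖Mσ‖_{ℓ²} ≥ c‖σ‖_{ℓ²}` for all finitely supported `σ`. -/

theorem slanted_matrix_not_stable
    (m : ℤ × ℤ → ℤ × ℤ → ℂ)
    (w : ℝ → ℝ) (hw_anti : AntitoneOn w (Set.Ici 0)) (hw_nonneg : ∀ x, 0 ≤ w x)
    (δ : ℝ) (hδ : 0 < δ)
    (hwO : w =O[atTop] fun x : ℝ => x ^ (-2 - δ))
    (lam : ℝ) (hlam : 1 < lam) (K₀ : ℝ) (hK₀ : 0 < K₀)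
    (hm : ∀ j' j : ℤ × ℤ,
      K₀ < max |lam * (j'.1 : ℝ) - (j.1 : ℝ)| |lam * (j'.2 : ℝ) - (j.2 : ℝ)| →
      ‖m j' j‖ ≤ w (max |lam * (j'.1 : ℝ) - (j.1 : ℝ)| |lam * (j'.2 : ℝ) - (j.2 : ℝ)|)) :
    ¬ ∃ c : ℝ, 0 < c ∧ ∀ σ : (ℤ × ℤ) →₀ ℂ,
      ENNReal.ofReal (c ^ 2 * ∑ j ∈ σ.support, ‖σ j‖ ^ 2)
        ≤ ∑' j' : ℤ × ℤ, (‖∑ j ∈ σ.support, m j' j * σ j‖₊ : ENNReal) ^ 2 := by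
  classical
  rintro ⟨c, hc, hstab⟩
  -- extract big-O constant
  obtain ⟨C₀, hC₀⟩ := Asymptotics.isBigO_iff.mp hwO
  obtain ⟨x₀, hx₀⟩ := eventually_atTop.mp hC₀
  set C : ℝ := max C₀ 1 with hCdef
  have hC1 : (1:ℝ) ≤ C := le_max_right _ _
  have hC0 : (0:ℝ) ≤ C := by linarith
  have hCb : ∀ x : ℝ, max x₀ 1 ≤ x → w x ≤ C * x ^ (-2 - δ) := by
    intro x hx
    have hx1 : (1:ℝ) ≤ x := le_trans (le_max_right _ _) hx
    have hxp : (0:ℝ) < x := by linarith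
    have h := hx₀ x (le_trans (le_max_left _ _) hx)
    rw [Real.norm_eq_abs, Real.norm_eq_abs, abs_of_nonneg (hw_nonneg x),
      abs_of_pos (Real.rpow_pos_of_pos hxp _)] at h
    calc w x ≤ C₀ * x ^ (-2 - δ) := h
      _ ≤ C * x ^ (-2 - δ) := by
          apply mul_le_mul_of_nonneg_right (le_max_left _ _)
            (Real.rpow_nonneg hxp.le _)
  set p : ℝ := 1 + δ / 2 with hpdef
  have hp : 1 < p := by rw [hpdef]; linarith
  obtain ⟨D, hD0, hD⟩ := oneD p hp
  set ρ : ℝ := (lam - 1) / 4 with hρdef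
  have hρ : 0 < ρ := by rw [hρdef]; linarith
  set K₁ : ℝ := max (max K₀ x₀) 1 with hK₁def
  -- pick N
  have e2 : Tendsto (fun N : ℕ => ρ * (N : ℝ)) atTop atTop :=
    (tendsto_natCast_atTop_atTop).const_mul_atTop hρ
  have e3 : Tendsto (fun N : ℕ => c ^ 2 * (N : ℝ) ^ δ) atTop atTop :=
    ((tendsto_rpow_atTop hδ).comp tendsto_natCast_atTop_atTop).const_mul_atTop
      (by positivity)
  obtain ⟨N, hN⟩ := (((eventually_ge_atTop 3).and
    (e2.eventually_ge_atTop K₁)).and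
    (e3.eventually_gt_atTop (C ^ 2 * (D * D) * ρ ^ (-(2+δ))))).exists
  obtain ⟨⟨hN3, hNK⟩, hNc⟩ := hN
  have hN0 : (0:ℝ) < N := by exact_mod_cast Nat.lt_of_lt_of_le (by norm_num) hN3
  set R : ℝ := ρ * N with hRdef
  have hRK₁ : K₁ ≤ R := hNK
  have hR1 : (1:ℝ) ≤ R := le_trans (le_max_right _ _) hRK₁
  have hRK₀ : K₀ ≤ R := le_trans (le_trans (le_max_left _ _) (le_max_left _ _)) hRK₁
  have hRx₀ : max x₀ 1 ≤ R := max_le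
    (le_trans (le_trans (le_max_right _ _) (le_max_left _ _)) hRK₁) hR1
  -- sets
  set I : Finset ℤ := Finset.Icc ⌈(-R) / lam⌉ ⌊(((N:ℝ) - 1) + R) / lam⌋ with hIdef
  set B : Finset (ℤ × ℤ) := Finset.Icc (0:ℤ) ((N:ℤ) - 1) ×ˢ Finset.Icc (0:ℤ) ((N:ℤ) - 1) with hBdef
  set S : Finset (ℤ × ℤ) := I ×ˢ I with hSdef
  have hBcard : B.card = N * N := by
    rw [hBdef, Finset.card_product, Int.card_Icc]
    simp
  have hl0 : (0:ℝ) < lam := by linarith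
  have hIcard : I.card < N := by
    have f1 : lam * (⌊((↑N:ℝ) - 1 + R) / lam⌋ : ℝ) ≤ (↑N:ℝ) - 1 + R := by
      have := Int.floor_le (((↑N:ℝ) - 1 + R) / lam)
      calc lam * (⌊((↑N:ℝ) - 1 + R) / lam⌋ : ℝ) ≤ lam * (((↑N:ℝ) - 1 + R) / lam) :=
            mul_le_mul_of_nonneg_left this hl0.le
        _ = (↑N:ℝ) - 1 + R := by field_simp
    have f2 : -R ≤ lam * (⌈-R / lam⌉ : ℝ) := by
      have := Int.le_ceil (-R / lam)
      calc -R = lam * (-R / lam) := by field_simp [mul_comm]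
        _ ≤ lam * (⌈-R / lam⌉ : ℝ) := mul_le_mul_of_nonneg_left this hl0.le
    have hZr : ((⌊((↑N:ℝ) - 1 + R) / lam⌋ + 1 - ⌈-R / lam⌉ : ℤ) : ℝ) < (N : ℝ) := by
      have hN3r : (3:ℝ) ≤ (N:ℝ) := by exact_mod_cast hN3
      have hRval : R = (lam - 1) / 4 * N := by rw [hRdef, hρdef]
      push_cast
      nlinarith [f1, f2, mul_pos (sub_pos.mpr hlam) (by linarith : (0:ℝ) < (N:ℝ) - 2)]
    have hZ : (⌊((↑N:ℝ) - 1 + R) / lam⌋ + 1 - ⌈-R / lam⌉ : ℤ) < (N : ℤ) := by exact_mod_cast hZr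
    rw [hIdef, Int.card_Icc]
    omega
  have hScard : S.card < B.card := by
    rw [hSdef, hBdef, Finset.card_product, Finset.card_product]
    calc I.card * I.card < N * N := by
          apply Nat.mul_lt_mul_of_lt_of_le hIcard (le_of_lt hIcard)
          omega
      _ = _ := by rw [Int.card_Icc]; simp
  obtain ⟨σ, hσ0, hσsupp, hker⟩ := exists_kernel m B S hScard
  set E : ℝ := ∑ j ∈ σ.support, ‖σ j‖ ^ 2 with hEdef
  have hE0 : 0 < E := by
    obtain ⟨j, hj⟩ := Finsupp.support_nonempty_iff.mpr hσ0
    apply Finset.sum_pos' (fun i _ => by positivity)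
    exact ⟨j, hj, pow_pos (norm_pos_iff.mpr (Finsupp.mem_support_iff.mp hj)) 2⟩
  have hEB : ∑ j ∈ B, ‖σ j‖ ^ 2 = E := by
    rw [hEdef]
    symm
    apply Finset.sum_subset hσsupp
    intro j _ hj
    simp [Finsupp.notMem_support_iff.mp hj]
  have hrow : ∀ j', ∑ j ∈ σ.support, m j' j * σ j = ∑ j ∈ B, m j' j * σ j := by
    intro j'
    apply Finset.sum_subset hσsupp
    intro j _ hj
    simp [Finsupp.notMem_support_iff.mp hj]
  -- geometric separation
  have hfar1 : ∀ a x : ℤ, a ∉ I → x ∈ Finset.Icc (0:ℤ) ((N:ℤ) - 1) →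
      R < |lam * (a:ℝ) - (x:ℝ)| := by
    intro a x ha hx
    rw [hIdef, Finset.mem_Icc, not_and_or, not_le, not_le] at ha
    rw [Finset.mem_Icc] at hx
    have hx0 : (0:ℝ) ≤ (x:ℝ) := by exact_mod_cast hx.1
    have hx1 : (x:ℝ) ≤ (N:ℝ) - 1 := by
      have : (x:ℤ) ≤ (N:ℤ) - 1 := hx.2
      have h2 : ((x:ℤ):ℝ) ≤ (((N:ℤ) - 1 : ℤ):ℝ) := by exact_mod_cast this
      push_cast at h2
      exact h2
    rcases ha with h | h
    · have h1 : (a:ℝ) < -R / lam := by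
        have : (a:ℝ) ≤ (⌈-R / lam⌉ : ℝ) - 1 := by
          have : a ≤ ⌈-R / lam⌉ - 1 := by omega
          exact_mod_cast this
        have := Int.ceil_lt_add_one (-R / lam)
        linarith
      have h2 : lam * (a:ℝ) < -R := by
        have := (lt_div_iff₀ hl0).mp h1
        linarith [this]
      calc R < (x:ℝ) - lam * (a:ℝ) := by linarith
        _ = -(lam * (a:ℝ) - (x:ℝ)) := by ring
        _ ≤ |lam * (a:ℝ) - (x:ℝ)| := neg_le_abs _
    · have h1 : ((↑N:ℝ) - 1 + R) / lam < (a:ℝ) := by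
        rw [← Int.floor_lt] at *
        exact_mod_cast h
      have h2 : (↑N:ℝ) - 1 + R < lam * (a:ℝ) := by
        have := (div_lt_iff₀ hl0).mp h1
        linarith [this]
      calc R < lam * (a:ℝ) - (x:ℝ) := by linarith
        _ ≤ |lam * (a:ℝ) - (x:ℝ)| := le_abs_self _
  have hfar : ∀ j' ∉ S, ∀ j ∈ B, R <
      max |lam * (j'.1:ℝ) - (j.1:ℝ)| |lam * (j'.2:ℝ) - (j.2:ℝ)| := by
    intro j' hj' j hj
    rw [hSdef, Finset.mem_product, not_and_or] at hj'
    rw [hBdef, Finset.mem_product] at hj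
    rcases hj' with h | h
    · exact lt_of_lt_of_le (hfar1 _ _ h hj.1) (le_max_left _ _)
    · exact lt_of_lt_of_le (hfar1 _ _ h hj.2) (le_max_right _ _)
  -- entry bound for far rows
  have hmb : ∀ j' ∉ S, ∀ j ∈ B, ‖m j' j‖ ^ 2 ≤
      C ^ 2 * R ^ (-(2+δ)) *
        ((max |(j'.1:ℝ) - (j.1:ℝ)/lam| 1) ^ (-p) * (max |(j'.2:ℝ) - (j.2:ℝ)/lam| 1) ^ (-p)) := by
    intro j' hj' j hj
    have hMgt := hfar j' hj' j hj
    have hMK₀ : K₀ < _ := lt_of_le_of_lt hRK₀ hMgt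
    have hwm := hm j' j hMK₀
    have hMx₀ : max x₀ 1 ≤ max |lam * (j'.1:ℝ) - (j.1:ℝ)| |lam * (j'.2:ℝ) - (j.2:ℝ)| :=
      le_trans hRx₀ hMgt.le
    have hWb : ‖m j' j‖ ≤ C * (max |lam * (j'.1:ℝ) - (j.1:ℝ)| |lam * (j'.2:ℝ) - (j.2:ℝ)|) ^ (-2-δ) :=
      le_trans hwm (hCb _ hMx₀)
    have hshr : ∀ a x : ℤ, |(a:ℝ) - (x:ℝ)/lam| ≤ |lam * (a:ℝ) - (x:ℝ)| := by
      intro a x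
      have hl0 : (0:ℝ) < lam := by linarith
      have : lam * (a:ℝ) - (x:ℝ) = lam * ((a:ℝ) - (x:ℝ)/lam) := by field_simp [mul_comm]
      rw [this, abs_mul, abs_of_pos hl0]
      nlinarith [abs_nonneg ((a:ℝ) - (x:ℝ)/lam)]
      
    rw [hpdef]
    exact entry_bound C R δ _ _ _ _ _ hC0 hδ hR1 hMgt (hshr _ _) (hshr _ _)
      (norm_nonneg _) hWb
  -- main estimate
  have key := hstab σ
  have hstep : (∑' j' : ℤ × ℤ, (‖∑ j ∈ σ.support, m j' j * σ j‖₊ : ENNReal) ^ 2)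
      ≤ ENNReal.ofReal ((N * N : ℝ) * (C ^ 2 * R ^ (-(2+δ)) * (D * D)) * E) := by
    have pointwise : ∀ j' : ℤ × ℤ, (‖∑ j ∈ σ.support, m j' j * σ j‖₊ : ENNReal) ^ 2
        ≤ (∑ j ∈ B, (if j' ∈ S then 0 else ENNReal.ofReal (‖m j' j‖ ^ 2))) * ENNReal.ofReal E := by
      intro j'
      by_cases hj' : j' ∈ S
      · simp [hrow j', hker j' hj', hj']
      · simp only [hj', if_false]
        have hCS : ‖∑ j ∈ B, m j' j * σ j‖ ^ 2 ≤ (∑ j ∈ B, ‖m j' j‖ ^ 2) * E := by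
          have t1 : ‖∑ j ∈ B, m j' j * σ j‖ ≤ ∑ j ∈ B, ‖m j' j‖ * ‖σ j‖ := by
            refine le_trans (norm_sum_le _ _) (le_of_eq ?_)
            exact Finset.sum_congr rfl fun j _ => norm_mul _ _
          have t2 : (∑ j ∈ B, ‖m j' j‖ * ‖σ j‖) ^ 2
              ≤ (∑ j ∈ B, ‖m j' j‖ ^ 2) * (∑ j ∈ B, ‖σ j‖ ^ 2) :=
            Finset.sum_mul_sq_le_sq_mul_sq _ _ _
          rw [hEB] at t2
          calc ‖∑ j ∈ B, m j' j * σ j‖ ^ 2 ≤ (∑ j ∈ B, ‖m j' j‖ * ‖σ j‖) ^ 2 :=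
                pow_le_pow_left₀ (norm_nonneg _) t1 2
            _ ≤ _ := t2
        calc (‖∑ j ∈ σ.support, m j' j * σ j‖₊ : ENNReal) ^ 2
            = ENNReal.ofReal (‖∑ j ∈ B, m j' j * σ j‖ ^ 2) := by
              rw [hrow j', ENNReal.ofReal_pow (norm_nonneg _), ← enorm_eq_nnnorm, ofReal_norm]
          _ ≤ ENNReal.ofReal ((∑ j ∈ B, ‖m j' j‖ ^ 2) * E) := ENNReal.ofReal_le_ofReal hCS
          _ = (∑ j ∈ B, ENNReal.ofReal (‖m j' j‖ ^ 2)) * ENNReal.ofReal E := by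
              rw [ENNReal.ofReal_mul (by positivity),
                ENNReal.ofReal_sum_of_nonneg (fun i _ => by positivity)]
    have tail : ∀ j ∈ B, (∑' j' : ℤ × ℤ, (if j' ∈ S then 0 else ENNReal.ofReal (‖m j' j‖ ^ 2)))
        ≤ ENNReal.ofReal (C ^ 2 * R ^ (-(2+δ))) * (ENNReal.ofReal D * ENNReal.ofReal D) := by
      intro j hj
      have ptw : ∀ j' : ℤ × ℤ, (if j' ∈ S then 0 else ENNReal.ofReal (‖m j' j‖ ^ 2))
          ≤ ENNReal.ofReal (C ^ 2 * R ^ (-(2+δ))) *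
            (ENNReal.ofReal ((max |(j'.1:ℝ) - (j.1:ℝ)/lam| 1) ^ (-p)) *
             ENNReal.ofReal ((max |(j'.2:ℝ) - (j.2:ℝ)/lam| 1) ^ (-p))) := by
        intro j'
        by_cases hj' : j' ∈ S
        · simp [hj']
        · simp only [hj', if_false]
          rw [← ENNReal.ofReal_mul (by positivity), ← ENNReal.ofReal_mul (by positivity)]
          exact ENNReal.ofReal_le_ofReal (hmb j' hj' j hj)
      calc (∑' j' : ℤ × ℤ, (if j' ∈ S then 0 else ENNReal.ofReal (‖m j' j‖ ^ 2)))
          ≤ ∑' j' : ℤ × ℤ, ENNReal.ofReal (C ^ 2 * R ^ (-(2+δ))) *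
              (ENNReal.ofReal ((max |(j'.1:ℝ) - (j.1:ℝ)/lam| 1) ^ (-p)) *
               ENNReal.ofReal ((max |(j'.2:ℝ) - (j.2:ℝ)/lam| 1) ^ (-p))) :=
            ENNReal.tsum_le_tsum ptw
        _ = ENNReal.ofReal (C ^ 2 * R ^ (-(2+δ))) *
              ((∑' a : ℤ, ENNReal.ofReal ((max |(a:ℝ) - (j.1:ℝ)/lam| 1) ^ (-p))) *
               (∑' b : ℤ, ENNReal.ofReal ((max |(b:ℝ) - (j.2:ℝ)/lam| 1) ^ (-p)))) := by
            rw [ENNReal.tsum_mul_left]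
            congr 1
            rw [ENNReal.tsum_prod']
            simp_rw [ENNReal.tsum_mul_left]
            rw [ENNReal.tsum_mul_right]
        _ ≤ ENNReal.ofReal (C ^ 2 * R ^ (-(2+δ))) * (ENNReal.ofReal D * ENNReal.ofReal D) := by
            exact mul_le_mul' le_rfl (mul_le_mul' (hD _) (hD _))
    calc (∑' j' : ℤ × ℤ, (‖∑ j ∈ σ.support, m j' j * σ j‖₊ : ENNReal) ^ 2)
        ≤ ∑' j' : ℤ × ℤ, (∑ j ∈ B, (if j' ∈ S then 0 else ENNReal.ofReal (‖m j' j‖ ^ 2)))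
            * ENNReal.ofReal E := ENNReal.tsum_le_tsum pointwise
      _ = (∑ j ∈ B, ∑' j' : ℤ × ℤ, (if j' ∈ S then 0 else ENNReal.ofReal (‖m j' j‖ ^ 2)))
            * ENNReal.ofReal E := by
          rw [ENNReal.tsum_mul_right, Summable.tsum_finsetSum (fun j _ => ENNReal.summable)]
      _ ≤ (∑ _j ∈ B, ENNReal.ofReal (C ^ 2 * R ^ (-(2+δ))) * (ENNReal.ofReal D * ENNReal.ofReal D))
            * ENNReal.ofReal E := by
          gcongr with j hj
          exact tail j hj
      _ = ENNReal.ofReal ((N * N : ℝ) * (C ^ 2 * R ^ (-(2+δ)) * (D * D)) * E) := by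
          rw [Finset.sum_const, hBcard, nsmul_eq_mul]
          rw [← ENNReal.ofReal_mul hD0,
            ← ENNReal.ofReal_mul (by positivity : (0:ℝ) ≤ C ^ 2 * R ^ (-(2+δ))),
            ← ENNReal.ofReal_natCast (N * N),
            ← ENNReal.ofReal_mul (by positivity : (0:ℝ) ≤ ((N * N : ℕ) : ℝ)),
            ← ENNReal.ofReal_mul (by positivity)]
          congr 1
          push_cast
          ring
  -- numeric contradiction
  have hQ : (N * N : ℝ) * (C ^ 2 * R ^ (-(2+δ)) * (D * D)) < c ^ 2 := by
    have hX : (0:ℝ) < (N:ℝ) ^ δ := Real.rpow_pos_of_pos hN0 δ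
    have e0 : (N:ℝ) ^ ((2:ℕ):ℝ) * (N:ℝ) ^ (-(2+δ)) = ((N:ℝ) ^ δ)⁻¹ := by
      rw [← Real.rpow_add hN0, ← Real.rpow_neg hN0.le]
      norm_num
    have e : (N * N : ℝ) * (C ^ 2 * R ^ (-(2+δ)) * (D * D))
        = (C ^ 2 * (D * D) * ρ ^ (-(2+δ))) * ((N:ℝ) ^ δ)⁻¹ := by
      rw [hRdef, Real.mul_rpow hρ.le hN0.le]
      rw [← e0, Real.rpow_natCast]
      ring
    rw [e, ← div_eq_mul_inv, div_lt_iff₀ hX]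
    exact hNc
  have hfin := le_trans key hstep
  rw [ENNReal.ofReal_le_ofReal_iff (by positivity)] at hfin
  rw [← hEdef] at hfin
  exact absurd (le_of_mul_le_mul_right hfin hE0) (not_le.mpr hQ)
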